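/- If L ⊆ ℝ^d is a countable union of line segments, then there exists a G_δ set O ⊆ ℝ^d with L ⊆ O whose Hausdorff dimension equals one. -/

import Mathlib

open Set

open Metric MeasureTheory Filter Topology

variable {E : Type*} [NormedAddCommGroup E] [NormedSpace ℝ E]

/-- tendsto helper -/
lemma tendsto_aux {C r : ℝ} (hC : 0 < C) (hr : 1 < r) :
    Tendsto (fun N : ℕ => ((N : ℝ) + 1) * (C / N) ^ r) atTop (𝓝 0) := by
  have h0 : (0:ℝ) < r := by linarith
  have h1 : Tendsto (fun N : ℕ => C ^ r * ((N:ℝ) ^ (1 - r) + (N:ℝ) ^ (-r))) atTop (𝓝 (C ^ r * (0 + 0))) := by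
    apply Tendsto.const_mul
    exact ((tendsto_rpow_neg_atTop (by linarith : (0:ℝ) < r - 1)).comp
      tendsto_natCast_atTop_atTop |>.congr (fun x => by simp [Function.comp, neg_sub])).add
      ((tendsto_rpow_neg_atTop h0).comp tendsto_natCast_atTop_atTop)
  simp only [add_zero, mul_zero] at h1
  apply h1.congr'
  filter_upwards [eventually_gt_atTop 0] with N hN
  have hNpos : (0:ℝ) < N := by exact_mod_cast hN
  rw [Real.div_rpow hC.le hNpos.le, Real.rpow_neg hNpos.le]
  have : (N:ℝ) ^ (1 - r) = N * ((N:ℝ)^r)⁻¹ := by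
    rw [sub_eq_add_neg, Real.rpow_add hNpos, Real.rpow_one, Real.rpow_neg hNpos.le]
  rw [this]
  ring

lemma seg_cover (a b : E) {r : ℝ} (hr : 1 < r) {δ : ℝ} (hδ : 0 < δ) {ε : ℝ} (hε : 0 < ε) :
    ∃ t : ℕ → Set E, (∀ i, IsOpen (t i)) ∧ segment ℝ a b ⊆ ⋃ i, t i ∧
      (∀ i, EMetric.diam (t i) ≤ ENNReal.ofReal δ) ∧
      ∑' i, EMetric.diam (t i) ^ r ≤ ENNReal.ofReal ε := by
  have hr0 : (0:ℝ) < r := by linarith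
  set C : ℝ := 2 * (‖b - a‖ + 1) with hCdef
  have hC : 0 < C := by positivity
  have h1 : ∀ᶠ N : ℕ in atTop, ((N:ℝ) + 1) * (C / N) ^ r ≤ ε :=
    (tendsto_aux hC hr).eventually (eventually_le_nhds hε)
  have h2 : ∀ᶠ N : ℕ in atTop, C / N ≤ δ :=
    (tendsto_const_div_atTop_nhds_zero_nat C).eventually (eventually_le_nhds hδ)
  obtain ⟨N, ⟨hN1, hNε⟩, hNδ⟩ := (((eventually_ge_atTop 1).and h1).and h2).exists
  have hNpos : (0:ℝ) < N := by exact_mod_cast hN1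
  set ρ : ℝ := (‖b - a‖ + 1) / N with hρdef
  have hρpos : 0 < ρ := by positivity
  have h2ρ : 2 * ρ = C / N := by rw [hρdef, hCdef]; ring
  set t : ℕ → Set E := fun i => if i ≤ N then ball (a + ((i:ℝ)/N) • (b - a)) ρ else ∅ with ht
  have hdiam : ∀ i, EMetric.diam (t i) ≤ ENNReal.ofReal (C / N) := by
    intro i
    rw [ht]
    by_cases hi : i ≤ N
    · simp only [hi, if_true]
      rw [← Metric.emetric_ball]
      refine (EMetric.diam_ball).trans ?_
      rw [← h2ρ, ← ENNReal.ofReal_ofNat 2, ← ENNReal.ofReal_mul (by norm_num)]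
    · simp [hi, EMetric.diam, Metric.ediam_empty]
  refine ⟨t, ?_, ?_, ?_, ?_⟩
  · intro i
    rw [ht]
    by_cases hi : i ≤ N <;> simp [hi, isOpen_ball]
  · rw [segment_eq_image']
    rintro p ⟨θ, ⟨hθ0, hθ1⟩, rfl⟩
    set i : ℕ := ⌊θ * N⌋.toNat with hidef
    have hfl0 : (0:ℤ) ≤ ⌊θ * N⌋ := Int.floor_nonneg.2 (by positivity)
    have hicast : (i:ℝ) = (⌊θ * N⌋ : ℝ) := by
      rw [hidef]; exact_mod_cast congrArg (fun z : ℤ => (z : ℝ)) (Int.toNat_of_nonneg hfl0)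
    have hiN : i ≤ N := by
      have : (⌊θ * N⌋ : ℝ) ≤ (N:ℝ) := (Int.floor_le _).trans (by nlinarith)
      exact_mod_cast hicast ▸ this
    have hle : (i:ℝ) ≤ θ * N := hicast ▸ Int.floor_le _
    have hlt : θ * N < (i:ℝ) + 1 := by
      rw [hicast]; exact Int.lt_floor_add_one _
    refine mem_iUnion.2 ⟨i, ?_⟩
    rw [ht]
    simp only [hiN, if_true]
    rw [mem_ball]
    have hdist : dist (a + θ • (b - a)) (a + ((i:ℝ)/N) • (b - a))
        = |θ - (i:ℝ)/N| * ‖b - a‖ := by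
      rw [dist_eq_norm]
      have : a + θ • (b - a) - (a + ((i:ℝ)/N) • (b - a)) = (θ - (i:ℝ)/N) • (b - a) := by
        rw [sub_smul]; abel
      rw [this, norm_smul, Real.norm_eq_abs]
    rw [hdist]
    have habs : |θ - (i:ℝ)/N| ≤ 1 / N := by
      have h1' : (i:ℝ)/N ≤ θ := by rw [div_le_iff₀ hNpos]; linarith
      rw [abs_of_nonneg (by linarith), sub_le_iff_le_add, add_comm, ← add_div,
        le_div_iff₀ hNpos]
      linarith
    calc |θ - (i:ℝ)/N| * ‖b - a‖ ≤ (1/N) * ‖b - a‖ := by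
          exact mul_le_mul_of_nonneg_right habs (norm_nonneg _)
      _ < ρ := by rw [hρdef]; rw [div_mul_eq_mul_div, one_mul, div_lt_div_iff_of_pos_right hNpos]; linarith
  · intro i
    exact (hdiam i).trans (ENNReal.ofReal_le_ofReal hNδ)
  · have hzero : ∀ i ∉ Finset.range (N+1), EMetric.diam (t i) ^ r = 0 := by
      intro i hi
      have : ¬ i ≤ N := by simpa [Nat.lt_succ_iff] using hi
      rw [ht]
      simp [this, ENNReal.zero_rpow_of_pos hr0, EMetric.diam, Metric.ediam_empty]
    calc ∑' i, EMetric.diam (t i) ^ r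
        = ∑ i ∈ Finset.range (N+1), EMetric.diam (t i) ^ r := tsum_eq_sum hzero
      _ ≤ ∑ _i ∈ Finset.range (N+1), ENNReal.ofReal ((C/N) ^ r) := by
          refine Finset.sum_le_sum fun i _ => ?_
          calc EMetric.diam (t i) ^ r ≤ (ENNReal.ofReal (C/N)) ^ r :=
                ENNReal.rpow_le_rpow (hdiam i) hr0.le
            _ = ENNReal.ofReal ((C/N) ^ r) := by
                rw [← ENNReal.ofReal_rpow_of_pos (by positivity)]
      _ = (N+1 : ℕ) * ENNReal.ofReal ((C/N) ^ r) := by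
          rw [Finset.sum_const, Finset.card_range, nsmul_eq_mul]
      _ = ENNReal.ofReal (((N:ℝ)+1) * (C/N) ^ r) := by
          rw [ENNReal.ofReal_mul (by positivity), ← ENNReal.ofReal_natCast (N+1)]
          push_cast
          ring_nf
      _ ≤ ENNReal.ofReal ε := ENNReal.ofReal_le_ofReal hNε

open ENNReal in
lemma exists_gdelta [MeasurableSpace E] [BorelSpace E] (f : ℕ → E × E) :
    ∃ G : Set E, (⋃ m, segment ℝ (f m).1 (f m).2) ⊆ G ∧ IsGδ G ∧ dimH G ≤ 1 := by
  have hofReal : ∀ n : ℕ, ENNReal.ofReal ((1/2:ℝ)^n) = (2⁻¹ : ℝ≥0∞)^n := by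
    intro n
    rw [ENNReal.ofReal_pow (by norm_num)]
    congr 1
    rw [one_div, ENNReal.ofReal_inv_of_pos two_pos, ENNReal.ofReal_ofNat]
  -- choose covers
  have key : ∀ k m : ℕ, ∃ t : ℕ → Set E, (∀ i, IsOpen (t i)) ∧
      segment ℝ (f m).1 (f m).2 ⊆ ⋃ i, t i ∧
      (∀ i, EMetric.diam (t i) ≤ ENNReal.ofReal ((1/2:ℝ)^k)) ∧
      ∑' i, EMetric.diam (t i) ^ (1 + 1/((k:ℝ)+1)) ≤ ENNReal.ofReal ((1/2:ℝ)^(k+m+1)) := by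
    intro k m
    refine seg_cover _ _ ?_ ?_ ?_
    · have : 0 < 1/((k:ℝ)+1) := by positivity
      linarith
    · positivity
    · positivity
  choose T hTopen hTcov hTdiam hTsum using key
  set G : Set E := ⋂ k, ⋃ p : ℕ × ℕ, T k p.1 p.2 with hG
  have hsub : (⋃ m, segment ℝ (f m).1 (f m).2) ⊆ G := by
    refine subset_iInter fun k => iUnion_subset fun m => ?_
    refine (hTcov k m).trans ?_
    exact iUnion_subset fun i => subset_iUnion_of_subset (m, i) subset_rfl
  refine ⟨G, hsub, ?_, ?_⟩
  · exact .iInter fun k => (isOpen_iUnion fun (p : ℕ × ℕ) => hTopen k p.1 p.2).isGδ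
  · refine dimH_le fun s hs => ?_
    by_contra hs1
    push_neg at hs1
    have hs1' : (1:ℝ) < (s:ℝ) := by exact_mod_cast hs1
    have hzero : μH[(s:ℝ)] G = 0 := by
      have hle := MeasureTheory.Measure.hausdorffMeasure_le_liminf_tsum (s:ℝ) G
        (fun k => ENNReal.ofReal ((1/2:ℝ)^k))
        (by
          simp_rw [hofReal]
          exact ENNReal.tendsto_pow_atTop_nhds_zero_of_lt_one
            (by norm_num : (2⁻¹ : ℝ≥0∞) < 1))
        (fun (k : ℕ) (p : ℕ × ℕ) => T k p.1 p.2)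
        (Eventually.of_forall fun k p => hTdiam k p.1 p.2)
        (Eventually.of_forall fun k => iInter_subset _ k)
      refine le_antisymm (hle.trans ?_) (zero_le)
      have hBnd : ∀ᶠ k : ℕ in Filter.atTop,
          (∑' p : ℕ × ℕ, EMetric.diam (T k p.1 p.2) ^ (s:ℝ)) ≤ (2⁻¹ : ℝ≥0∞)^k := by
        have hev : ∀ᶠ k : ℕ in Filter.atTop, 1/((k:ℝ)+1) ≤ (s:ℝ) - 1 :=
          tendsto_one_div_add_atTop_nhds_zero_nat.eventually
            (eventually_le_nhds (by linarith))
        filter_upwards [hev] with k hk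
        have hexp : 1 + 1/((k:ℝ)+1) ≤ (s:ℝ) := by linarith
        calc (∑' p : ℕ × ℕ, EMetric.diam (T k p.1 p.2) ^ (s:ℝ))
            ≤ ∑' p : ℕ × ℕ, EMetric.diam (T k p.1 p.2) ^ (1 + 1/((k:ℝ)+1)) := by
              refine ENNReal.tsum_le_tsum fun p => ?_
              refine ENNReal.rpow_le_rpow_of_exponent_ge ?_ hexp
              refine (hTdiam k p.1 p.2).trans ?_
              rw [hofReal]
              exact pow_le_one' (by norm_num) _
          _ = ∑' m, ∑' i, EMetric.diam (T k m i) ^ (1 + 1/((k:ℝ)+1)) :=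
              ENNReal.tsum_prod (f := fun m i => EMetric.diam (T k m i) ^ (1 + 1/((k:ℝ)+1)))
          _ ≤ ∑' m : ℕ, ENNReal.ofReal ((1/2:ℝ)^(k+m+1)) :=
              ENNReal.tsum_le_tsum fun m => hTsum k m
          _ ≤ (2⁻¹ : ℝ≥0∞)^k := by
              simp_rw [hofReal]
              have : ∀ m : ℕ, (2⁻¹ : ℝ≥0∞)^(k+m+1) = 2⁻¹^k * (2⁻¹ * 2⁻¹^m) := by
                intro m; rw [pow_add, pow_succ]; ring
              simp_rw [this]
              rw [ENNReal.tsum_mul_left, ENNReal.tsum_mul_left, ENNReal.tsum_geometric]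
              have h12 : (1 : ℝ≥0∞) - 2⁻¹ = 2⁻¹ := ENNReal.one_sub_inv_two
              rw [h12, inv_inv, ENNReal.inv_mul_cancel (by norm_num) (by norm_num), mul_one]
      calc Filter.liminf (fun k => ∑' p : ℕ × ℕ, EMetric.diam (T k p.1 p.2) ^ (s:ℝ))
            Filter.atTop
          ≤ Filter.liminf (fun k => (2⁻¹ : ℝ≥0∞)^k) Filter.atTop :=
            Filter.liminf_le_liminf hBnd
        _ = 0 := (ENNReal.tendsto_pow_atTop_nhds_zero_of_lt_one
            (by norm_num : (2⁻¹ : ℝ≥0∞) < 1)).liminf_eq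
    rw [hzero] at hs
    simp at hs

theorem stmt1 (d : ℕ) (hd : 1 ≤ d) (L : Set (EuclideanSpace ℝ (Fin d)))
    (f : ℕ → EuclideanSpace ℝ (Fin d) × EuclideanSpace ℝ (Fin d))
    (hL : L = ⋃ m, segment ℝ (f m).1 (f m).2) :
    ∃ O : Set (EuclideanSpace ℝ (Fin d)), L ⊆ O ∧ IsGδ O ∧ dimH O = 1 := by
  obtain ⟨G, hGsub, hGδ, hGdim⟩ := exists_gdelta f
  set b : EuclideanSpace ℝ (Fin d) := EuclideanSpace.single ⟨0, hd⟩ (1:ℝ) with hb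
  have hnb : ‖b‖ = 1 := by rw [hb, EuclideanSpace.norm_single]; norm_num
  set g : ℝ → EuclideanSpace ℝ (Fin d) := fun t => t • b with hg
  have hiso : Isometry g := Isometry.of_dist_eq fun x y => by
    rw [hg]
    simp only
    rw [dist_eq_norm, ← sub_smul, norm_smul, hnb, mul_one, Real.norm_eq_abs, Real.dist_eq]
  set S : Set (EuclideanSpace ℝ (Fin d)) := g '' Icc (0:ℝ) 1 with hS
  have hdimS : dimH S = 1 := by
    rw [hS, hiso.dimH_image]
    have h1 : dimH (Icc (0:ℝ) 1) = Module.finrank ℝ ℝ :=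
      Real.dimH_of_nonempty_interior (by rw [interior_Icc]; exact ⟨1/2, by norm_num⟩)
    rw [h1, Module.finrank_self, Nat.cast_one]
  have hSclosed : IsClosed S := (isCompact_Icc.image hiso.continuous).isClosed
  refine ⟨G ∪ S, ?_, hGδ.union hSclosed.isGδ, ?_⟩
  · rw [hL]; exact hGsub.trans subset_union_left
  · rw [dimH_union, hdimS, max_eq_right hGdim]
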